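/- Let p ∈ [0.9, 1) and define r(z) = p - p^{2^z} + z·2^z·p^{2^z}·ln 2·ln p for z ≥ 1. Then r(z) tends to p as z → +∞, and there is a unique z₀ ∈ (-log₂(-ln p), ∞) with r(z₀) = 0; moreover r(z) < 0 for all z ∈ [1, z₀) and r(z) > 0 for all z ∈ (z₀, ∞). -/

import Mathlib

open Real Filter Set

set_option maxHeartbeats 1600000 in
/-- For `p ∈ [0.9,1)` and `r(z) = p - p^{2^z} + z 2^z p^{2^z} ln 2 ln p`:
`r(z) → p` as `z → +∞`, and there is a unique `z₀ ∈ (-log₂(-ln p), ∞)` with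
`r(z₀) = 0`; moreover `r(z) < 0` for all `z ∈ [1, z₀)` and `r(z) > 0` for all
`z ∈ (z₀, ∞)`. -/
theorem stmt_16 (p : ℝ) (hp : p ∈ Set.Ico (0.9:ℝ) 1)
    (r : ℝ → ℝ)
    (hr : ∀ z : ℝ, r z = p - p ^ ((2:ℝ) ^ z) +
      z * (2:ℝ) ^ z * p ^ ((2:ℝ) ^ z) * Real.log 2 * Real.log p) :
    Filter.Tendsto r Filter.atTop (nhds p) ∧
    ∃ z₀ : ℝ, -Real.logb 2 (-Real.log p) < z₀ ∧ r z₀ = 0 ∧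
      (∀ w : ℝ, -Real.logb 2 (-Real.log p) < w → r w = 0 → w = z₀) ∧
      (∀ z : ℝ, 1 ≤ z → z < z₀ → r z < 0) ∧
      (∀ z : ℝ, z₀ < z → 0 < r z) := by
  obtain ⟨hp1, hp2⟩ := hp
  have hp0 : (0:ℝ) < p := by linarith
  set a : ℝ := Real.log 2 with ha_def
  set L : ℝ := Real.log p with hL_def
  have ha : 0 < a := Real.log_pos (by norm_num)
  have ha2 : (0.6931:ℝ) < a := by
    have := Real.log_two_gt_d9; rw [ha_def]; linarith
  have hL : L < 0 := Real.log_neg hp0 hp2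
  have hLp : L ≤ p - 1 := Real.log_le_sub_one_of_pos hp0
  have hq0 : 0 < -L := by linarith
  have hq9 : -L ≤ 1/9 := by
    have h1 : Real.log p⁻¹ ≤ p⁻¹ - 1 := Real.log_le_sub_one_of_pos (by positivity)
    rw [Real.log_inv] at h1
    have h2 : p⁻¹ ≤ (0.9:ℝ)⁻¹ := inv_anti₀ (by norm_num) hp1
    rw [← hL_def] at h1
    nlinarith
  have hL1 : L * (-L)⁻¹ = -1 := by
    rw [show L * (-L)⁻¹ = -((-L) * (-L)⁻¹) by ring, mul_inv_cancel₀ hq0.ne']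
  set zm : ℝ := -Real.logb 2 (-L) with hzm_def
  -- 2^zm in exp form
  have hEzm : Real.exp (a * zm) = (-L)⁻¹ := by
    have h1 : (2:ℝ) ^ zm = Real.exp (a * zm) := Real.rpow_def_of_pos (by norm_num) zm
    rw [← h1, hzm_def, ← Real.logb_inv, Real.rpow_logb (by norm_num) (by norm_num) (by positivity)]
  have hzm3 : 3 ≤ zm := by
    rw [hzm_def, ← Real.logb_inv]
    rw [Real.le_logb_iff_rpow_le (by norm_num) (by positivity)]
    have h9 : (9:ℝ) ≤ (-L)⁻¹ := by
      rw [le_inv_comm₀ (by norm_num) hq0]; linarith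
    have : ((2:ℝ) ^ (3:ℝ)) = 8 := by
      rw [show (3:ℝ) = ((3:ℕ):ℝ) by norm_num, Real.rpow_natCast]; norm_num
    linarith [this]
  -- rewrite r in exp form
  have key : ∀ z : ℝ, r z = p - Real.exp (L * Real.exp (a*z)) +
      z * Real.exp (a*z) * Real.exp (L * Real.exp (a*z)) * a * L := by
    intro z
    have h2 : (2:ℝ) ^ z = Real.exp (a*z) := Real.rpow_def_of_pos (by norm_num) z
    rw [hr, h2, Real.rpow_def_of_pos hp0, ← hL_def]
  clear_value a L zm
  clear hr
  have hrfun : r = fun z => p - Real.exp (L * Real.exp (a*z)) +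
      z * Real.exp (a*z) * Real.exp (L * Real.exp (a*z)) * a * L := funext key
  -- derivative
  have hderiv : ∀ z : ℝ, HasDerivAt r
      (a^2 * L * z * Real.exp (a*z) * Real.exp (L * Real.exp (a*z)) * (1 + L * Real.exp (a*z))) z := by
    intro z
    rw [hrfun]
    have hE : HasDerivAt (fun z : ℝ => Real.exp (a*z)) (Real.exp (a*z) * a) z := by
      have h1 : HasDerivAt (fun z : ℝ => a*z) a z := by
        simpa using (hasDerivAt_id z).const_mul a
      simpa using h1.exp
    have hF : HasDerivAt (fun z : ℝ => Real.exp (L * Real.exp (a*z)))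
        (Real.exp (L * Real.exp (a*z)) * (L * (Real.exp (a*z) * a))) z := by
      exact (hE.const_mul L).exp
    have hT := ((((hasDerivAt_id z).mul hE).mul hF).mul_const a).mul_const L
    have h := ((hasDerivAt_const z p).sub hF).add hT
    convert h using 1
    · rfl
    · rfl
    · rfl
    simp only [id_eq, Pi.mul_apply]
    ring
  have hcont : Continuous r := by
    rw [hrfun]; fun_prop
  -- derivative sign
  have hdsign_neg : ∀ z ∈ Set.Ioo (1:ℝ) zm, deriv r z < 0 := by
    intro z hz
    rw [(hderiv z).deriv]
    have h1 : Real.exp (a*z) < (-L)⁻¹ := by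
      rw [← hEzm]; exact Real.exp_lt_exp.2 (by nlinarith [hz.2])
    have h2 : 0 < 1 + L * Real.exp (a*z) := by
      have : L * Real.exp (a*z) > L * (-L)⁻¹ := by
        exact (mul_lt_mul_left_of_neg hL).2 h1
      nlinarith [hL1]
    have hz1 : 0 < z := by linarith [hz.1]
    have e1 : 0 < Real.exp (a*z) := Real.exp_pos _
    have e2 : 0 < Real.exp (L * Real.exp (a*z)) := Real.exp_pos _
    have haa : 0 < a^2 := by positivity
    nlinarith [mul_pos (mul_pos (mul_pos (mul_pos haa hz1) e1) e2) h2]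
  have hdsign_pos : ∀ z ∈ Set.Ioi zm, 0 < deriv r z := by
    intro z hz
    rw [(hderiv z).deriv]
    have h1 : (-L)⁻¹ < Real.exp (a*z) := by
      rw [← hEzm]; exact Real.exp_lt_exp.2 (by nlinarith [Set.mem_Ioi.1 hz])
    have h2 : 1 + L * Real.exp (a*z) < 0 := by
      have : L * Real.exp (a*z) < L * (-L)⁻¹ := (mul_lt_mul_left_of_neg hL).2 h1
      nlinarith [hL1]
    have hz1 : 0 < z := by have := Set.mem_Ioi.1 hz; linarith
    have e1 : 0 < Real.exp (a*z) := Real.exp_pos _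
    have e2 : 0 < Real.exp (L * Real.exp (a*z)) := Real.exp_pos _
    have haa : 0 < a^2 := by positivity
    nlinarith [mul_pos (mul_pos (mul_pos (mul_pos haa hz1) e1) e2) (neg_pos.2 h2)]
  -- monotonicity
  have hanti : StrictAntiOn r (Set.Icc 1 zm) := by
    apply strictAntiOn_of_deriv_neg (convex_Icc 1 zm) hcont.continuousOn
    intro z hz
    rw [interior_Icc] at hz
    exact hdsign_neg z hz
  have hmono : StrictMonoOn r (Set.Ici zm) := by
    apply strictMonoOn_of_deriv_pos (convex_Ici zm) hcont.continuousOn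
    intro z hz
    rw [interior_Ici] at hz
    exact hdsign_pos z hz
  -- r 1 < 0
  have hr1 : r 1 < 0 := by
    have h2 : Real.exp (a * 1) = 2 := by rw [mul_one, ha_def, Real.exp_log]; norm_num
    have hp2' : Real.exp (L * 2) = p^2 := by
      rw [show L * 2 = L + L by ring, Real.exp_add, hL_def, Real.exp_log hp0]; ring
    rw [key 1, h2, hp2']
    have hpa : 1 < 2*p*a := by nlinarith
    have hkey : 0 < (1-p) * (p * (2*p*a - 1)) :=
      mul_pos (by linarith) (by nlinarith)
    have h5 : 2*p^2*a*L ≤ 2*p^2*a*(p-1) :=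
      mul_le_mul_of_nonneg_left hLp (by positivity)
    nlinarith [hkey, h5]
  -- r zm < 0
  have hrzm : r zm < 0 := by
    rw [key zm, hEzm, hL1]
    have hzmL : zm * (-L)⁻¹ * Real.exp (-1) * a * L = -(zm * a * Real.exp (-1)) := by
      rw [show zm * (-L)⁻¹ * Real.exp (-1) * a * L
          = zm * Real.exp (-1) * a * (L * (-L)⁻¹) by ring, hL1]
      ring
    rw [hzmL]
    have he : Real.exp (-1) > 0.3678 := by
      have h1 : Real.exp 1 < 2.7182818286 := Real.exp_one_lt_d9
      have h2 : Real.exp (-1) = (Real.exp 1)⁻¹ := by rw [Real.exp_neg]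
      rw [h2]
      rw [gt_iff_lt, lt_inv_comm₀ (by norm_num) (Real.exp_pos 1)]
      calc Real.exp 1 < 2.7182818286 := h1
        _ ≤ (0.3678:ℝ)⁻¹ := by norm_num
    have hza : (2.0793:ℝ) < zm * a := by nlinarith
    have hzapos : (0:ℝ) < zm * a := mul_pos (by linarith) ha
    have hzae : zm * a * 0.3678 ≤ zm * a * Real.exp (-1) :=
      mul_le_mul_of_nonneg_left he.le hzapos.le
    linarith
  -- limit
  have hEtop : Tendsto (fun z : ℝ => Real.exp (a*z)) atTop atTop := by
    apply Real.tendsto_exp_atTop.comp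
    exact (tendsto_id.const_mul_atTop ha)
  have hFlim : Tendsto (fun z : ℝ => Real.exp (L * Real.exp (a*z))) atTop (nhds 0) := by
    apply Real.tendsto_exp_atBot.comp
    exact Tendsto.const_mul_atTop_of_neg hL hEtop
  have hglim : Tendsto (fun t : ℝ => Real.log t * t * Real.exp (L * t)) atTop (nhds 0) := by
    have hsq : Tendsto (fun t : ℝ => t^2 * Real.exp (L * t)) atTop (nhds 0) := by
      have h1 : Tendsto (fun t : ℝ => ((-L) * t)^2 * Real.exp (-((-L) * t))) atTop (nhds 0) :=
        (tendsto_pow_mul_exp_neg_atTop_nhds_zero 2).comp (tendsto_id.const_mul_atTop hq0)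
      have h2 := h1.const_mul ((-L)⁻¹^2)
      rw [mul_zero] at h2
      refine h2.congr (fun t => ?_)
      rw [show -(-L * t) = L * t by ring]
      have hLne : L ≠ 0 := hL.ne
      field_simp
    apply squeeze_zero' (g := fun t : ℝ => t^2 * Real.exp (L * t)) ?_ ?_ hsq
    · filter_upwards [eventually_ge_atTop (1:ℝ)] with t ht
      have : 0 ≤ Real.log t := Real.log_nonneg ht
      positivity
    · filter_upwards [eventually_ge_atTop (1:ℝ)] with t ht
      have h1 : Real.log t ≤ t := Real.log_le_sub_one_of_pos (by linarith) |>.trans (by linarith)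
      have h2 : 0 < t := by linarith
      have h3 : 0 < Real.exp (L*t) := Real.exp_pos _
      nlinarith [mul_nonneg (mul_nonneg (by linarith : (0:ℝ) ≤ t - Real.log t) h2.le) h3.le]
  have hTlim : Tendsto (fun z : ℝ => z * Real.exp (a*z) * Real.exp (L * Real.exp (a*z)) * a * L)
      atTop (nhds 0) := by
    have hcomp := hglim.comp hEtop
    simp only [Function.comp_def, Real.log_exp] at hcomp
    have h2 := hcomp.const_mul L
    rw [mul_zero] at h2
    refine h2.congr (fun z => ?_)
    ring
  have hlim : Tendsto r atTop (nhds p) := by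
    have h := ((tendsto_const_nhds (x := p) (f := (atTop : Filter ℝ))).sub hFlim).add hTlim
    rw [sub_zero, add_zero] at h
    rw [hrfun]
    exact h
  refine ⟨hlim, ?_⟩
  -- find M with r M > 0
  have hev : ∀ᶠ z in atTop, p/2 < r z := hlim.eventually (eventually_gt_nhds (by linarith))
  obtain ⟨b, hb⟩ := hev.exists_forall_of_atTop
  set M : ℝ := max b (zm + 1) with hM_def
  have hMge : zm ≤ M := by
    have : zm + 1 ≤ M := le_max_right _ _
    linarith
  have hrM : 0 < r M := by
    have := hb M (le_max_left _ _)
    linarith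
  have hIVT := intermediate_value_Icc hMge hcont.continuousOn
  have h0mem : (0:ℝ) ∈ Set.Icc (r zm) (r M) := ⟨le_of_lt hrzm, le_of_lt hrM⟩
  obtain ⟨z₀, hz₀mem, hz₀⟩ := hIVT h0mem
  have hz₀gt : zm < z₀ := by
    rcases lt_or_eq_of_le hz₀mem.1 with h | h
    · exact h
    · exfalso; rw [← h] at hz₀; linarith
  refine ⟨z₀, hz₀gt, hz₀, ?_, ?_, ?_⟩
  · intro w hw hw0
    rcases lt_trichotomy w z₀ with h | h | h
    · have := hmono (Set.mem_Ici.2 (le_of_lt hw)) (Set.mem_Ici.2 hz₀mem.1) h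
      rw [hw0, hz₀] at this; linarith
    · exact h
    · have := hmono (Set.mem_Ici.2 hz₀mem.1) (Set.mem_Ici.2 (le_of_lt hw)) h
      rw [hw0, hz₀] at this; linarith
  · intro z hz1 hzlt
    rcases le_or_gt z zm with h | h
    · have hmem1 : (1:ℝ) ∈ Set.Icc (1:ℝ) zm := ⟨le_refl _, by linarith⟩
      have hmemz : z ∈ Set.Icc (1:ℝ) zm := ⟨hz1, h⟩
      have := hanti.antitoneOn hmem1 hmemz hz1
      linarith
    · have := hmono (Set.mem_Ici.2 (le_of_lt h)) (Set.mem_Ici.2 hz₀mem.1) hzlt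
      rw [hz₀] at this; linarith
  · intro z hz
    have := hmono (Set.mem_Ici.2 hz₀mem.1) (Set.mem_Ici.2 (by linarith : zm ≤ z)) hz
    rw [hz₀] at this; linarith
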